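/- Let α be an irrational number such that ‖qα‖ ≥ C q^{−γ} for all positive integers q, with constants γ ≥ 1 and C > 0. Let θ > 1 and τ > 0 satisfy θ = γτ. Then there exists a constant C' > 0 such that for all ε ∈ (0, 1/2): Σ_{m∈ℤ, m≠0} e^{−m²ε} / ( |m|^θ ‖mα‖^τ ) ≤ C' log(ε^{−1}). -/

import Mathlib

open MeasureTheory ProbabilityTheory Filter Finset Real
open scoped ENNReal

noncomputable section

/-- Distance from a real number `x` to the nearest integer: the norm of its image
on the torus `𝕋 = ℝ/ℤ`. -/
def torusNorm (x : ℝ) : ℝ := ‖(x : UnitAddCircle)‖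

/-- The set of couplings of two Borel measures on the torus. -/
def couplings (ν₀ ν₁ : Measure UnitAddCircle) : Set (Measure (UnitAddCircle × UnitAddCircle)) :=
  {γ | γ.map Prod.fst = ν₀ ∧ γ.map Prod.snd = ν₁}

/-- The `L^p`-Wasserstein distance between two Borel measures on the torus. -/
def wassersteinDist (p : ℝ) (ν₀ ν₁ : Measure UnitAddCircle) : ℝ :=
  sInf ((fun γ => (∫ z, dist z.1 z.2 ^ p ∂γ) ^ (1 / p)) '' couplings ν₀ ν₁)

/-- The empirical measure `μ_n = (1/n) ∑_{j=1}^n δ_{{S_j α}}` on the torus,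
for a given path `S : ℕ → ℤ` of the random walk. -/
def empiricalMeasure (α : ℝ) (S : ℕ → ℤ) (n : ℕ) : Measure UnitAddCircle :=
  (n : ℝ≥0∞)⁻¹ • ∑ j ∈ Finset.range n, Measure.dirac (((S (j + 1) : ℝ) * α : ℝ) : UnitAddCircle)

/-- The expected `L^p`-Wasserstein distance `E[W_p(μ_n, μ)]` between the empirical measure
of the random walk `S_j = X_1 + ⋯ + X_j` (mod 1, rotated by `α`) and the uniform
distribution `μ` on the torus. -/
def expWassersteinEmp {Ω : Type*} [MeasurableSpace Ω] (P : Measure Ω) (X : ℕ → Ω → ℤ)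
    (α : ℝ) (p : ℝ) (n : ℕ) : ℝ :=
  ∫ ω, wassersteinDist p (empiricalMeasure α (fun j => ∑ i ∈ Finset.range j, X i ω) n) volume ∂P

lemma torusNorm_nonneg (x : ℝ) : 0 ≤ torusNorm x := norm_nonneg _

lemma torusNorm_neg (x : ℝ) : torusNorm (-x) = torusNorm x := by
  unfold torusNorm; rw [AddCircle.coe_neg, norm_neg]

lemma torusNorm_sub_le (x y : ℝ) : torusNorm (x - y) ≤ torusNorm x + torusNorm y := by
  unfold torusNorm; rw [AddCircle.coe_sub]; exact norm_sub_le _ _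


lemma countA (α C γ : ℝ) (hC : 0 < C) (hγ : 1 ≤ γ)
    (hdio : ∀ q : ℕ, 0 < q → C * (q : ℝ) ^ (-γ) ≤ torusNorm ((q : ℝ) * α))
    (k : ℕ) (t : ℝ) (ht : 0 < t) (s : Finset ℕ)
    (hs : s ⊆ Finset.Ico (2 ^ k) (2 ^ (k + 1)))
    (hval : ∀ n ∈ s, torusNorm ((n : ℝ) * α) ≤ t) :
    (s.card : ℝ) ≤ 2 ^ k * (2 * t / C) ^ (1 / γ) + 1 := by
  have hγ0 : (0 : ℝ) < γ := by linarith
  have hγne : γ ≠ 0 := ne_of_gt hγ0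
  -- gap lower bound
  have hgap : ∀ n ∈ s, ∀ n' ∈ s, n < n' →
      (C / (2 * t)) ^ (1 / γ) ≤ ((n' - n : ℕ) : ℝ) := by
    intro n hn n' hn' hlt
    have hdnat : 0 < n' - n := by omega
    set d : ℝ := ((n' - n : ℕ) : ℝ) with hd
    have hdpos : (0 : ℝ) < d := by rw [hd]; exact_mod_cast hdnat
    have h1 : torusNorm (d * α) ≤ 2 * t := by
      have he : d * α = (n' : ℝ) * α - (n : ℝ) * α := by
        rw [hd]
        push_cast [Nat.cast_sub hlt.le]
        ring
      rw [he]
      have := torusNorm_sub_le ((n' : ℝ) * α) ((n : ℝ) * α)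
      have h2 := hval n hn
      have h3 := hval n' hn'
      linarith
    have h2 := hdio (n' - n) hdnat
    have h4 : C * d ^ (-γ) ≤ 2 * t := le_trans h2 h1
    have h5 : (0 : ℝ) < d ^ γ := Real.rpow_pos_of_pos hdpos γ
    have h3 : C / (2 * t) ≤ d ^ γ := by
      rw [Real.rpow_neg hdpos.le] at h4
      rw [div_le_iff₀ (by positivity)]
      calc C = C * (d ^ γ)⁻¹ * d ^ γ := by field_simp
        _ ≤ 2 * t * d ^ γ := by
            nlinarith [mul_le_mul_of_nonneg_right h4 h5.le]
        _ = d ^ γ * (2 * t) := by ring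
      ;
    have h6 := Real.rpow_le_rpow (by positivity) h3 (by positivity : (0:ℝ) ≤ 1 / γ)
    rwa [← Real.rpow_mul hdpos.le, mul_one_div, div_self hγne, Real.rpow_one] at h6
  set D : ℝ := (C / (2 * t)) ^ (1 / γ) with hD
  have hDpos : 0 < D := Real.rpow_pos_of_pos (by positivity) _
  have hDinv : D⁻¹ = (2 * t / C) ^ (1 / γ) := by
    rw [hD, ← Real.inv_rpow (by positivity), inv_div]
  rcases le_or_gt D 1 with hD1 | hD1
  · -- crude bound
    have hcard : s.card ≤ 2 ^ k := by
      have := Finset.card_le_card hs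
      rw [Nat.card_Ico] at this
      have h2k : (2:ℕ) ^ (k+1) = 2 ^ k + 2 ^ k := by rw [pow_succ]; ring
      rw [h2k, Nat.add_sub_cancel] at this
      exact this
    have h1 : (1 : ℝ) ≤ D⁻¹ := by rw [le_inv_comm₀ one_pos hDpos]; simpa using hD1
    have h2 : (s.card : ℝ) ≤ 2 ^ k := by exact_mod_cast hcard
    have h3 : (2 : ℝ) ^ k * 1 ≤ 2 ^ k * D⁻¹ := by
      apply mul_le_mul_of_nonneg_left h1 (by positivity)
    rw [← hDinv]
    nlinarith
  · -- injection
    set dn : ℕ := ⌈D⌉₊ with hdn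
    have hdn0 : 0 < dn := Nat.ceil_pos.mpr hDpos
    have hDd : D ≤ (dn : ℝ) := Nat.le_ceil D
    have hmono : ∀ n ∈ s, ∀ n' ∈ s, n < n' →
        (n - 2 ^ k) / dn < (n' - 2 ^ k) / dn := by
      intro n hn n' hn' hlt
      have hgapn : dn ≤ n' - n := by
        rw [hdn, Nat.ceil_le]
        exact hgap n hn n' hn' hlt
      have hn2 : 2 ^ k ≤ n := (Finset.mem_Ico.mp (hs hn)).1
      have key : n - 2 ^ k + dn ≤ n' - 2 ^ k := by omega
      calc (n - 2 ^ k) / dn < (n - 2 ^ k) / dn + 1 := Nat.lt_succ_self _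
        _ = (n - 2 ^ k + dn) / dn := (Nat.add_div_right _ hdn0).symm
        _ ≤ (n' - 2 ^ k) / dn := Nat.div_le_div_right key
    have hinj : Set.InjOn (fun n => (n - 2 ^ k) / dn) s := by
      intro n hn n' hn' h
      rcases lt_trichotomy n n' with h1 | h1 | h1
      · exact absurd h (ne_of_lt (hmono n hn n' hn' h1))
      · exact h1
      · exact absurd h.symm (ne_of_lt (hmono n' hn' n hn h1))
    have hmaps : ∀ n ∈ s, (n - 2 ^ k) / dn ∈ Finset.range ((2 ^ k - 1) / dn + 1) := by
      intro n hn
      have h := Finset.mem_Ico.mp (hs hn)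
      have : n - 2 ^ k ≤ 2 ^ k - 1 := by
        have : (2:ℕ) ^ (k+1) = 2 ^ k + 2 ^ k := by rw [pow_succ]; ring
        omega
      simp only [Finset.mem_range]
      exact Nat.lt_succ_of_le (Nat.div_le_div_right this)
    have hcard : s.card ≤ (2 ^ k - 1) / dn + 1 := by
      have := Finset.card_le_card_of_injOn _ hmaps hinj
      simpa using this
    have hc1 : (s.card : ℝ) ≤ (((2 ^ k - 1) / dn : ℕ) : ℝ) + 1 := by exact_mod_cast hcard
    have hc2 : (((2 ^ k - 1) / dn : ℕ) : ℝ) ≤ ((2 ^ k - 1 : ℕ) : ℝ) / (dn : ℝ) :=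
      Nat.cast_div_le
    have hcast : ((2 ^ k - 1 : ℕ) : ℝ) = (2 : ℝ) ^ k - 1 := by
      have : (1:ℕ) ≤ 2 ^ k := Nat.one_le_two_pow
      push_cast [Nat.cast_sub this]
      ring
    have hc3 : ((2 ^ k - 1 : ℕ) : ℝ) / (dn : ℝ) ≤ (2 : ℝ) ^ k / D := by
      rw [hcast]
      apply div_le_div₀ (by positivity) (by linarith) hDpos hDd
    rw [← hDinv]
    have : (2:ℝ) ^ k / D = 2 ^ k * D⁻¹ := div_eq_mul_inv _ _
    nlinarith [hc1, hc2, hc3]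


lemma blockB (α C γ θ τ : ℝ) (hC : 0 < C) (hγ : 1 ≤ γ) (hθ : 1 < θ) (hτ : 0 < τ)
    (hθτ : θ = γ * τ)
    (hdio : ∀ q : ℕ, 0 < q → C * (q : ℝ) ^ (-γ) ≤ torusNorm ((q : ℝ) * α))
    (k : ℕ) (s : Finset ℕ) (hs : s ⊆ Finset.Ico (2 ^ k) (2 ^ (k + 1))) :
    ∑ n ∈ s, torusNorm ((n : ℝ) * α) ^ (-τ) ≤
      ((2 : ℝ) ^ k) ^ θ *
        (C ^ (-τ) * (2 : ℝ) ^ θ + (2 / C) ^ τ * (∑' n : ℕ, (n : ℝ) ^ (-θ))) := by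
  have hγ0 : (0 : ℝ) < γ := by linarith
  have hθ0 : (0 : ℝ) < θ := by linarith
  have hγne : γ ≠ 0 := ne_of_gt hγ0
  set tn : ℕ → ℝ := fun n => torusNorm ((n : ℝ) * α) with htn
  set δ : ℝ := C * ((2 : ℝ) ^ (k + 1)) ^ (-γ) with hδ
  have hδpos : 0 < δ := mul_pos hC (Real.rpow_pos_of_pos (by positivity) _)
  have hmem : ∀ n ∈ s, 2 ^ k ≤ n ∧ n < 2 ^ (k + 1) := fun n hn => Finset.mem_Ico.mp (hs hn)
  have hlow : ∀ n ∈ s, δ ≤ tn n := by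
    intro n hn
    obtain ⟨h1, h2⟩ := hmem n hn
    have hn0 : 0 < n := lt_of_lt_of_le (Nat.two_pow_pos k) h1
    refine le_trans ?_ (hdio n hn0)
    rw [hδ]
    apply mul_le_mul_of_nonneg_left _ hC.le
    apply Real.rpow_le_rpow_of_nonpos (by positivity) _ (by linarith)
    exact_mod_cast h2.le
  have hpos : ∀ n ∈ s, 0 < tn n := fun n hn => lt_of_lt_of_le hδpos (hlow n hn)
  classical
  set P : ℕ → ℕ → Prop := fun m n => tn m < tn n ∨ (tn m = tn n ∧ m ≤ n) with hP
  have hPrefl : ∀ n, P n n := fun n => Or.inr ⟨rfl, le_refl n⟩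
  set r : ℕ → ℕ := fun n => (s.filter (fun m => P m n)).card with hr
  have hr1 : ∀ n ∈ s, 1 ≤ r n := by
    intro n hn
    exact Finset.card_pos.mpr ⟨n, Finset.mem_filter.mpr ⟨hn, hPrefl n⟩⟩
  have hrcard : ∀ n, r n ≤ s.card := fun n => Finset.card_le_card (Finset.filter_subset _ _)
  have hlt : ∀ a ∈ s, ∀ b ∈ s, P a b → ¬ P b a → r a < r b := by
    intro a ha b hb hPab hnPba
    apply Finset.card_lt_card
    have hsub : s.filter (fun m => P m a) ⊆ s.filter (fun m => P m b) := by
      apply Finset.monotone_filter_right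
      intro m _ hm
      rcases hm with h | ⟨h1, h2⟩
      · rcases hPab with h' | ⟨h1', _⟩
        · exact Or.inl (lt_trans h h')
        · exact Or.inl (h1' ▸ h)
      · rcases hPab with h' | ⟨h1', h2'⟩
        · exact Or.inl (h1 ▸ h')
        · exact Or.inr ⟨h1.trans h1', h2.trans h2'⟩
    refine (Finset.ssubset_iff_of_subset hsub).mpr
      ⟨b, Finset.mem_filter.mpr ⟨hb, hPrefl b⟩, fun hc => hnPba (Finset.mem_filter.mp hc).2⟩
  have hinj : Set.InjOn r s := by
    intro n hn n' hn' he
    by_contra hne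
    have htot : (P n n' ∧ ¬ P n' n) ∨ (P n' n ∧ ¬ P n n') := by
      rcases lt_trichotomy (tn n) (tn n') with h | h | h
      · refine Or.inl ⟨Or.inl h, ?_⟩
        rintro (h' | ⟨h1, _⟩) <;> linarith
      · rcases Nat.lt_or_ge n n' with h2 | h2
        · refine Or.inl ⟨Or.inr ⟨h, h2.le⟩, ?_⟩
          rintro (h' | ⟨h1, h2'⟩)
          · linarith
          · omega
        · have h2' : n' < n := by omega
          refine Or.inr ⟨Or.inr ⟨h.symm, h2'.le⟩, ?_⟩
          rintro (h' | ⟨h1, h2''⟩)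
          · linarith
          · omega
      · refine Or.inr ⟨Or.inl h, ?_⟩
        rintro (h' | ⟨h1, _⟩) <;> linarith
    rcases htot with ⟨h1, h2⟩ | ⟨h1, h2⟩
    · exact absurd he (ne_of_lt (hlt n hn n' hn' h1 h2))
    · exact absurd he.symm (ne_of_lt (hlt n' hn' n hn h1 h2))
  -- lower bound for values via rank
  have hrank : ∀ n ∈ s, ((r n : ℝ) - 1) / 2 ^ k ≤ (2 * tn n / C) ^ (1 / γ) := by
    intro n hn
    have hcnt := countA α C γ hC hγ hdio k (tn n) (hpos n hn) (s.filter (fun m => P m n))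
      ((Finset.filter_subset _ _).trans hs) ?_
    · rw [div_le_iff₀ (by positivity : (0:ℝ) < (2:ℝ)^k)]
      rw [hr]
      push_cast
      nlinarith [hcnt]
    · intro m hm
      obtain ⟨hms, hPm⟩ := Finset.mem_filter.mp hm
      rcases hPm with h | ⟨h, _⟩
      · exact le_of_lt h
      · exact le_of_eq h
  have hval2 : ∀ n ∈ s, 2 ≤ r n → (C / 2) * (((r n : ℝ) - 1) / 2 ^ k) ^ γ ≤ tn n := by
    intro n hn h2
    have hx0 : (0:ℝ) ≤ ((r n : ℝ) - 1) / 2 ^ k := by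
      have h21 : (2:ℝ) ≤ r n := by exact_mod_cast h2
      exact div_nonneg (by linarith) (by positivity)
    have h3 := Real.rpow_le_rpow hx0 (hrank n hn) hγ0.le
    have htnp := hpos n hn
    rw [← Real.rpow_mul (by positivity : (0:ℝ) ≤ 2 * tn n / C), one_div,
      inv_mul_cancel₀ hγne, Real.rpow_one] at h3
    have h4 := mul_le_mul_of_nonneg_left h3 (by positivity : (0:ℝ) ≤ C / 2)
    have h5 : C / 2 * (2 * tn n / C) = tn n := by field_simp
    linarith
  -- per element bound
  set Z : ℝ := ∑' n : ℕ, (n : ℝ) ^ (-θ) with hZ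
  have hZ0 : 0 ≤ Z := tsum_nonneg fun n => Real.rpow_nonneg (Nat.cast_nonneg n) _
  set c2 : ℝ := (2 / C) ^ τ * ((2:ℝ) ^ k) ^ θ with hc2
  have hc20 : 0 ≤ c2 := by positivity
  set H : ℕ → ℝ := fun i => (if i = 1 then δ ^ (-τ) else 0) + c2 * (((i - 1 : ℕ)) : ℝ) ^ (-θ)
    with hH
  have hH0 : ∀ i, 0 ≤ H i := by
    intro i
    apply add_nonneg
    · split
      · exact Real.rpow_nonneg hδpos.le _
      · exact le_refl 0
    · exact mul_nonneg hc20 (Real.rpow_nonneg (Nat.cast_nonneg _) _)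
  have hbound : ∀ n ∈ s, tn n ^ (-τ) ≤ H (r n) := by
    intro n hn
    rcases eq_or_lt_of_le (hr1 n hn) with h1 | h2
    · -- r n = 1
      have hb : tn n ^ (-τ) ≤ δ ^ (-τ) :=
        Real.rpow_le_rpow_of_nonpos hδpos (hlow n hn) (by linarith)
      have : H (r n) = δ ^ (-τ) := by
        rw [hH, ← h1]
        simp [Real.zero_rpow (by linarith : -θ ≠ 0)]
      linarith
    · -- 2 ≤ r n
      have h2' : 2 ≤ r n := h2
      have hv := hval2 n hn h2'
      set x : ℝ := ((r n : ℝ) - 1) / 2 ^ k with hxdef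
      have hrn2 : (2:ℝ) ≤ (r n : ℝ) := by exact_mod_cast h2'
      have hx0 : 0 < x := by
        rw [hxdef]
        apply div_pos (by linarith) (by positivity)
      have hCx : 0 < (C / 2) * x ^ γ := by positivity
      have hlhs : tn n ^ (-τ) ≤ ((C / 2) * x ^ γ) ^ (-τ) :=
        Real.rpow_le_rpow_of_nonpos hCx hv (by linarith)
      have e1 : ((C / 2) * x ^ γ) ^ (-τ) = (C / 2) ^ (-τ) * (x ^ γ) ^ (-τ) :=
        Real.mul_rpow (by positivity) (Real.rpow_nonneg hx0.le _)
      have e2 : (x ^ γ) ^ (-τ) = x ^ (-θ) := by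
        rw [← Real.rpow_mul hx0.le]
        congr 1
        rw [hθτ]; ring
      have e3 : x ^ (-θ) = ((r n : ℝ) - 1) ^ (-θ) * (((2:ℝ) ^ k) ^ (-θ))⁻¹ := by
        rw [hxdef, Real.div_rpow (by linarith) (by positivity), div_eq_mul_inv]
      have e4 : (((2:ℝ) ^ k) ^ (-θ))⁻¹ = ((2:ℝ) ^ k) ^ θ := by
        rw [Real.rpow_neg (by positivity), inv_inv]
      have e5 : (C / 2) ^ (-τ) = (2 / C) ^ τ := by
        rw [Real.rpow_neg (by positivity), ← Real.inv_rpow (by positivity), inv_div]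
      have e6 : ((r n : ℝ) - 1) = (((r n - 1 : ℕ)) : ℝ) := by
        have := hr1 n hn
        push_cast [Nat.cast_sub this]
        ring
      have hrne : r n ≠ 1 := by omega
      have : H (r n) = (2 / C) ^ τ * ((2:ℝ) ^ k) ^ θ * (((r n - 1 : ℕ)) : ℝ) ^ (-θ) := by
        rw [hH]
        simp only [if_neg hrne]
        ring
      rw [this, ← e6]
      calc tn n ^ (-τ) ≤ ((C / 2) * x ^ γ) ^ (-τ) := hlhs
        _ = (2 / C) ^ τ * (((r n : ℝ) - 1) ^ (-θ) * ((2:ℝ) ^ k) ^ θ) := by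
            rw [e1, e2, e3, e4, e5]
        _ = (2 / C) ^ τ * ((2:ℝ) ^ k) ^ θ * ((r n : ℝ) - 1) ^ (-θ) := by ring
  -- summing up
  have himage : s.image r ⊆ Finset.Icc 1 s.card := by
    intro i hi
    obtain ⟨n, hn, rfl⟩ := Finset.mem_image.mp hi
    exact Finset.mem_Icc.mpr ⟨hr1 n hn, hrcard n⟩
  have hsum1 : ∑ i ∈ Finset.Icc 1 s.card, (if i = 1 then δ ^ (-τ) else 0) ≤ δ ^ (-τ) := by
    rw [Finset.sum_ite_eq' (Finset.Icc 1 s.card) 1 (fun _ => δ ^ (-τ))]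
    split
    · exact le_rfl
    · exact Real.rpow_nonneg hδpos.le _
  have hsum2 : ∑ i ∈ Finset.Icc 1 s.card, (((i - 1 : ℕ)) : ℝ) ^ (-θ) ≤ Z := by
    have hinj2 : Set.InjOn (fun i => i - 1) (Finset.Icc 1 s.card) := by
      intro i hi j hj hij
      have hi' := Finset.mem_Icc.mp hi
      have hj' := Finset.mem_Icc.mp hj
      simp only at hij
      omega
    have heq := Finset.sum_image (g := fun i => i - 1) (f := fun j : ℕ => (j : ℝ) ^ (-θ))
      (s := Finset.Icc 1 s.card) (fun x hx y hy h => hinj2 hx hy h)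
    rw [← heq]
    exact Summable.sum_le_tsum _ (fun i _ => Real.rpow_nonneg (Nat.cast_nonneg _) _)
      (Real.summable_nat_rpow.mpr (by linarith))
  have hδτ : δ ^ (-τ) = C ^ (-τ) * ((2:ℝ) ^ θ * ((2:ℝ) ^ k) ^ θ) := by
    rw [hδ, Real.mul_rpow hC.le (Real.rpow_nonneg (by positivity) _)]
    congr 1
    rw [← Real.rpow_natCast (2:ℝ) (k+1)]
    rw [← Real.rpow_mul (by norm_num : (0:ℝ) ≤ 2)]
    rw [← Real.rpow_mul (by norm_num : (0:ℝ) ≤ 2)]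
    rw [← Real.rpow_natCast ((2:ℝ)) k, ← Real.rpow_mul (by norm_num : (0:ℝ) ≤ 2),
      ← Real.rpow_add (by norm_num : (0:ℝ) < 2)]
    congr 1
    push_cast
    rw [hθτ]; ring
  calc ∑ n ∈ s, tn n ^ (-τ) ≤ ∑ n ∈ s, H (r n) := Finset.sum_le_sum hbound
    _ = ∑ i ∈ s.image r, H i := (Finset.sum_image (fun x hx y hy h => hinj hx hy h)).symm
    _ ≤ ∑ i ∈ Finset.Icc 1 s.card, H i :=
        Finset.sum_le_sum_of_subset_of_nonneg himage (fun i _ _ => hH0 i)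
    _ = (∑ i ∈ Finset.Icc 1 s.card, (if i = 1 then δ ^ (-τ) else 0)) +
        c2 * ∑ i ∈ Finset.Icc 1 s.card, (((i - 1 : ℕ)) : ℝ) ^ (-θ) := by
        rw [hH, Finset.sum_add_distrib, Finset.mul_sum]
    _ ≤ δ ^ (-τ) + c2 * Z := by
        have := mul_le_mul_of_nonneg_left hsum2 hc20
        linarith
    _ = ((2 : ℝ) ^ k) ^ θ * (C ^ (-τ) * (2 : ℝ) ^ θ + (2 / C) ^ τ * Z) := by
        rw [hδτ, hc2]; ring


lemma sumC (ε : ℝ) (hε : 0 < ε) (hε2 : ε < 1 / 2) (M : ℕ) :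
    ∑ k ∈ Finset.range M, Real.exp (-(4 : ℝ) ^ k * ε) ≤ (4 / Real.log 2) * Real.log ε⁻¹ := by
  set L := Real.log ε⁻¹ with hL
  have hεinv : 2 < ε⁻¹ := by
    rw [lt_inv_comm₀ two_pos hε]
    linarith
  have hlog2 : 0 < Real.log 2 := Real.log_pos one_lt_two
  have hLlog : Real.log 2 < L := Real.log_lt_log two_pos hεinv
  have hL0 : 0 < L := lt_trans hlog2 hLlog
  set k₁ : ℕ := ⌈Real.logb 4 ε⁻¹⌉₊ with hk₁
  have hlogb0 : 0 ≤ Real.logb 4 ε⁻¹ :=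
    Real.logb_nonneg (by norm_num) (by linarith)
  have h4k₁ : ε⁻¹ ≤ (4 : ℝ) ^ k₁ := by
    calc ε⁻¹ = (4 : ℝ) ^ (Real.logb 4 ε⁻¹) :=
          (Real.rpow_logb (by norm_num) (by norm_num) (by positivity)).symm
      _ ≤ (4 : ℝ) ^ ((k₁ : ℝ)) :=
          Real.rpow_le_rpow_of_exponent_le (by norm_num) (Nat.le_ceil _)
      _ = (4 : ℝ) ^ k₁ := Real.rpow_natCast 4 k₁
  have hk₁L : (k₁ : ℝ) ≤ L / Real.log 2 + 1 := by
    have h1 : (k₁ : ℝ) < Real.logb 4 ε⁻¹ + 1 := Nat.ceil_lt_add_one hlogb0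
    have h2 : Real.logb 4 ε⁻¹ ≤ L / Real.log 2 := by
      rw [Real.logb, Real.log_inv]
      rw [hL, Real.log_inv]
      apply div_le_div_of_nonneg_left ?_ hlog2 ?_
      · linarith [Real.log_nonpos (by linarith) (by linarith : ε ≤ 1)]
      · have : Real.log 2 < Real.log 4 := Real.log_lt_log two_pos (by norm_num)
        linarith
    linarith
  -- nonnegativity of terms
  have hterm0 : ∀ k : ℕ, 0 ≤ Real.exp (-(4 : ℝ) ^ k * ε) := fun k => (Real.exp_pos _).le
  set M' := max M (k₁ + 1) with hM'
  have hsub : ∑ k ∈ Finset.range M, Real.exp (-(4 : ℝ) ^ k * ε) ≤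
      ∑ k ∈ Finset.range M', Real.exp (-(4 : ℝ) ^ k * ε) := by
    apply Finset.sum_le_sum_of_subset_of_nonneg
    · exact Finset.range_subset_range.mpr (le_max_left _ _)
    · intro i _ _; exact hterm0 i
  have hsplit : ∑ k ∈ Finset.range M', Real.exp (-(4 : ℝ) ^ k * ε) =
      (∑ k ∈ Finset.range (k₁ + 1), Real.exp (-(4 : ℝ) ^ k * ε)) +
      ∑ k ∈ Finset.Ico (k₁ + 1) M', Real.exp (-(4 : ℝ) ^ k * ε) := by
    rw [Finset.range_eq_Ico, Finset.range_eq_Ico]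
    exact (Finset.sum_Ico_consecutive _ (Nat.zero_le _) (le_max_right _ _)).symm
  have hpart1 : ∑ k ∈ Finset.range (k₁ + 1), Real.exp (-(4 : ℝ) ^ k * ε) ≤ (k₁ : ℝ) + 1 := by
    calc ∑ k ∈ Finset.range (k₁ + 1), Real.exp (-(4 : ℝ) ^ k * ε)
        ≤ ∑ _k ∈ Finset.range (k₁ + 1), 1 := by
          apply Finset.sum_le_sum
          intro i _
          rw [Real.exp_le_one_iff]
          have : (0:ℝ) < (4:ℝ) ^ i := by positivity
          nlinarith
      _ = (k₁ : ℝ) + 1 := by simp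
  have hpart2 : ∑ k ∈ Finset.Ico (k₁ + 1) M', Real.exp (-(4 : ℝ) ^ k * ε) ≤ 1 := by
    rw [Finset.sum_Ico_eq_sum_range]
    have hterm : ∀ j : ℕ, Real.exp (-(4 : ℝ) ^ (k₁ + 1 + j) * ε) ≤ (1 / 2) ^ (j + 1) := by
      intro j
      have h1 : ((j : ℝ) + 1) ≤ (4 : ℝ) ^ (k₁ + 1 + j) * ε := by
        have e1 : (4 : ℝ) ^ (k₁ + 1 + j) = 4 ^ k₁ * 4 ^ (1 + j) := by
          rw [← pow_add]
          congr 1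
          omega
        have h2 : ((j:ℝ) + 1) ≤ (4:ℝ) ^ (1 + j) := by
          have := @Nat.lt_two_pow_self j
          have h3 : (j:ℝ) + 1 ≤ (2:ℝ) ^ j := by exact_mod_cast this
          have h4 : (2:ℝ) ^ j ≤ (4:ℝ) ^ j := by
            apply pow_le_pow_left₀ (by norm_num) (by norm_num)
          have h5 : (4:ℝ) ^ j ≤ (4:ℝ) ^ (1 + j) := by
            apply pow_le_pow_right₀ (by norm_num)
            omega
          linarith
        have h6 : ε⁻¹ * ((j:ℝ) + 1) ≤ (4:ℝ) ^ k₁ * (4:ℝ) ^ (1 + j) := by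
          apply mul_le_mul h4k₁ h2 (by positivity) (by positivity)
        rw [e1]
        calc ((j : ℝ) + 1) = ε⁻¹ * ((j:ℝ) + 1) * ε := by field_simp
          _ ≤ 4 ^ k₁ * 4 ^ (1 + j) * ε := by
              apply mul_le_mul_of_nonneg_right h6 hε.le
      calc Real.exp (-(4 : ℝ) ^ (k₁ + 1 + j) * ε) ≤ Real.exp (-((j : ℝ) + 1)) := by
            apply Real.exp_le_exp.mpr
            linarith
        _ = Real.exp (-1) ^ (j + 1) := by
            rw [← Real.exp_nat_mul]
            congr 1
            push_cast
            ring
        _ ≤ (1 / 2) ^ (j + 1) := by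
            apply pow_le_pow_left₀ (Real.exp_pos _).le
            rw [Real.exp_neg]
            rw [inv_le_comm₀ (Real.exp_pos _) (by norm_num)]
            have := Real.add_one_le_exp (1 : ℝ)
            linarith
    calc ∑ j ∈ Finset.range (M' - (k₁ + 1)), Real.exp (-(4 : ℝ) ^ (k₁ + 1 + j) * ε)
        ≤ ∑ j ∈ Finset.range (M' - (k₁ + 1)), (1 / 2 : ℝ) ^ (j + 1) :=
          Finset.sum_le_sum (fun j _ => hterm j)
      _ ≤ 1 := by
          have hgeo : ∀ N : ℕ, ∑ j ∈ Finset.range N, (1 / 2 : ℝ) ^ (j + 1) = 1 - (1/2)^N := by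
            intro N
            induction N with
            | zero => simp
            | succ n ih => rw [Finset.sum_range_succ, ih]; ring
          rw [hgeo]
          have : (0:ℝ) ≤ (1/2:ℝ) ^ (M' - (k₁ + 1)) := by positivity
          linarith
  have hfinal : (k₁ : ℝ) + 2 ≤ (4 / Real.log 2) * L := by
    have h1 : (1:ℝ) ≤ L / Real.log 2 := by
      rw [le_div_iff₀ hlog2]
      linarith
    rw [div_mul_eq_mul_div, mul_comm, ← div_mul_eq_mul_div]
    -- (L / log 2) * 4
    nlinarith [hk₁L, h1]
  calc ∑ k ∈ Finset.range M, Real.exp (-(4 : ℝ) ^ k * ε)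
      ≤ ∑ k ∈ Finset.range M', Real.exp (-(4 : ℝ) ^ k * ε) := hsub
    _ = _ := hsplit
    _ ≤ ((k₁ : ℝ) + 1) + 1 := add_le_add hpart1 hpart2
    _ = (k₁ : ℝ) + 2 := by ring
    _ ≤ (4 / Real.log 2) * L := hfinal


/-- Lemma 5.8 of the paper: if `‖qα‖ ≥ C q^{-γ}` for all `q ≥ 1` and
`θ = γτ` with `θ > 1`, `τ > 0`, then `∑_{m≠0} e^{-m²ε}/(|m|^θ ‖mα‖^τ) = O(log(1/ε))`. -/
theorem weighted_diophantine_sum_log_bound (α : ℝ) (hα : Irrational α)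
    (γ C : ℝ) (hγ : 1 ≤ γ) (hC : 0 < C)
    (hdio : ∀ q : ℕ, 0 < q → C * (q : ℝ) ^ (-γ) ≤ torusNorm ((q : ℝ) * α))
    (θ τ : ℝ) (hθ : 1 < θ) (hτ : 0 < τ) (hθτ : θ = γ * τ) :
    ∃ C' : ℝ, 0 < C' ∧ ∀ ε : ℝ, 0 < ε → ε < 1 / 2 →
      (∑' m : {m : ℤ // m ≠ 0},
          Real.exp (-((m : ℤ) : ℝ) ^ 2 * ε) /
            (|((m : ℤ) : ℝ)| ^ θ * torusNorm (((m : ℤ) : ℝ) * α) ^ τ)) ≤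
        C' * Real.log ε⁻¹ := by
  classical
  set Z : ℝ := ∑' n : ℕ, (n : ℝ) ^ (-θ) with hZ
  have hZ0 : 0 ≤ Z := tsum_nonneg fun n => Real.rpow_nonneg (Nat.cast_nonneg n) _
  set A₀ : ℝ := C ^ (-τ) * (2 : ℝ) ^ θ + (2 / C) ^ τ * Z with hA₀
  have hA₀pos : 0 < A₀ := by
    have h1 : 0 < C ^ (-τ) * (2 : ℝ) ^ θ :=
      mul_pos (Real.rpow_pos_of_pos hC _) (Real.rpow_pos_of_pos two_pos _)
    have h2 : 0 ≤ (2 / C) ^ τ * Z :=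
      mul_nonneg (Real.rpow_nonneg (by positivity) _) hZ0
    rw [hA₀]
    linarith
  refine ⟨2 * A₀ * (4 / Real.log 2), ?_, ?_⟩
  · have hlog2 : 0 < Real.log 2 := Real.log_pos one_lt_two
    positivity
  intro ε hε hε2
  set L : ℝ := Real.log ε⁻¹ with hLdef
  have hεinv : 2 < ε⁻¹ := by
    rw [lt_inv_comm₀ two_pos hε]; linarith
  have hlog2 : 0 < Real.log 2 := Real.log_pos one_lt_two
  have hL0 : 0 < L := lt_trans hlog2 (Real.log_lt_log two_pos hεinv)
  -- positivity of torusNorm at positive multiples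
  have htnpos : ∀ n : ℕ, 0 < n → 0 < torusNorm ((n : ℝ) * α) := by
    intro n hn
    refine lt_of_lt_of_le ?_ (hdio n hn)
    have : (0:ℝ) < (n:ℝ) := by exact_mod_cast hn
    positivity
  -- the one-sided function
  set G : ℕ → ℝ := fun n =>
    if n = 0 then 0 else
      Real.exp (-(n : ℝ) ^ 2 * ε) / ((n : ℝ) ^ θ * torusNorm ((n : ℝ) * α) ^ τ) with hG
  have hG0 : ∀ n, 0 ≤ G n := by
    intro n
    rw [hG]
    dsimp only
    split
    · exact le_rfl
    · apply div_nonneg (Real.exp_pos _).le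
      exact mul_nonneg (Real.rpow_nonneg (Nat.cast_nonneg _) _)
        (Real.rpow_nonneg (torusNorm_nonneg _) _)
  -- block bound for G
  have hblock : ∀ (k : ℕ) (sk : Finset ℕ), sk ⊆ Finset.Ico (2 ^ k) (2 ^ (k + 1)) →
      ∑ n ∈ sk, G n ≤ Real.exp (-(4 : ℝ) ^ k * ε) * A₀ := by
    intro k sk hsk
    have hB := blockB α C γ θ τ hC hγ hθ hτ hθτ hdio k sk hsk
    have hX : (0:ℝ) < ((2:ℝ) ^ k) ^ θ := Real.rpow_pos_of_pos (by positivity) _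
    have hptw : ∀ n ∈ sk, G n ≤
        Real.exp (-(4 : ℝ) ^ k * ε) * (((2:ℝ) ^ k) ^ θ)⁻¹ * torusNorm ((n : ℝ) * α) ^ (-τ) := by
      intro n hn
      obtain ⟨hn1, hn2⟩ := Finset.mem_Ico.mp (hsk hn)
      have hn0 : 0 < n := lt_of_lt_of_le (Nat.two_pow_pos k) hn1
      have hnR : ((2:ℝ) ^ k) ≤ (n : ℝ) := by exact_mod_cast hn1
      have hnRpos : (0:ℝ) < (n : ℝ) := by exact_mod_cast hn0
      have htn := htnpos n hn0
      have hY : (0:ℝ) < (n : ℝ) ^ θ := Real.rpow_pos_of_pos hnRpos _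
      have hT : (0:ℝ) < torusNorm ((n : ℝ) * α) ^ τ := Real.rpow_pos_of_pos htn _
      have hXY : ((2:ℝ) ^ k) ^ θ ≤ (n : ℝ) ^ θ :=
        Real.rpow_le_rpow (by positivity) hnR (by linarith)
      have hexp : Real.exp (-(n : ℝ) ^ 2 * ε) ≤ Real.exp (-(4 : ℝ) ^ k * ε) := by
        apply Real.exp_le_exp.mpr
        have h4 : ((2:ℝ) ^ k) ^ 2 = (4:ℝ) ^ k := by
          rw [show (4:ℝ) = 2 ^ 2 by norm_num, ← pow_mul, ← pow_mul, mul_comm]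
        have hsq : (4:ℝ) ^ k ≤ (n : ℝ) ^ 2 := by
          rw [← h4]
          exact pow_le_pow_left₀ (by positivity) hnR 2
        nlinarith
      have hGn : G n = Real.exp (-(n : ℝ) ^ 2 * ε) * ((n : ℝ) ^ θ)⁻¹ *
          (torusNorm ((n : ℝ) * α) ^ τ)⁻¹ := by
        rw [hG]
        dsimp only
        rw [if_neg (Nat.pos_iff_ne_zero.mp hn0)]
        rw [div_eq_mul_inv, mul_inv]
        ring
      rw [hGn, Real.rpow_neg (torusNorm_nonneg _)]
      have hinv : ((n : ℝ) ^ θ)⁻¹ ≤ (((2:ℝ) ^ k) ^ θ)⁻¹ := by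
        apply inv_anti₀ hX hXY
      apply mul_le_mul_of_nonneg_right _ (inv_nonneg.mpr hT.le)
      apply mul_le_mul hexp hinv (by positivity) (Real.exp_pos _).le
    calc ∑ n ∈ sk, G n
        ≤ ∑ n ∈ sk, Real.exp (-(4 : ℝ) ^ k * ε) * (((2:ℝ) ^ k) ^ θ)⁻¹ *
            torusNorm ((n : ℝ) * α) ^ (-τ) := Finset.sum_le_sum hptw
      _ = Real.exp (-(4 : ℝ) ^ k * ε) * (((2:ℝ) ^ k) ^ θ)⁻¹ *
            ∑ n ∈ sk, torusNorm ((n : ℝ) * α) ^ (-τ) := by rw [← Finset.mul_sum]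
      _ ≤ Real.exp (-(4 : ℝ) ^ k * ε) * (((2:ℝ) ^ k) ^ θ)⁻¹ * (((2:ℝ) ^ k) ^ θ * A₀) := by
          apply mul_le_mul_of_nonneg_left hB
          positivity
      _ = Real.exp (-(4 : ℝ) ^ k * ε) * A₀ := by
          field_simp
  -- arbitrary finite sums of G
  have hGsum : ∀ u : Finset ℕ, ∑ n ∈ u, G n ≤ A₀ * ((4 / Real.log 2) * L) := by
    intro u
    set u' := u.erase 0 with hu'
    have he : ∑ n ∈ u', G n = ∑ n ∈ u, G n := by
      apply Finset.sum_subset (Finset.erase_subset _ _)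
      intro x hx hx'
      have : x = 0 := by
        by_contra hxx
        exact hx' (Finset.mem_erase.mpr ⟨hxx, hx⟩)
      rw [this, hG]
      simp
    rw [← he]
    have hker := Finset.sum_fiberwise_of_maps_to
      (fun (x : ℕ) (hx : x ∈ u') => Finset.mem_image_of_mem (Nat.log 2) hx) G
    rw [← hker]
    obtain ⟨KM, hKM⟩ := Finset.exists_nat_subset_range (u'.image (Nat.log 2))
    calc ∑ k ∈ u'.image (Nat.log 2), ∑ n ∈ u'.filter (fun n => Nat.log 2 n = k), G n
        ≤ ∑ k ∈ u'.image (Nat.log 2), Real.exp (-(4 : ℝ) ^ k * ε) * A₀ := by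
          apply Finset.sum_le_sum
          intro k _
          apply hblock
          intro n hn
          obtain ⟨hnu, hnk⟩ := Finset.mem_filter.mp hn
          have hn0 : n ≠ 0 := (Finset.mem_erase.mp hnu).1
          rw [Finset.mem_Ico, ← hnk]
          exact ⟨Nat.pow_log_le_self 2 hn0, Nat.lt_pow_succ_log_self (by norm_num) n⟩
      _ ≤ ∑ k ∈ Finset.range KM, Real.exp (-(4 : ℝ) ^ k * ε) * A₀ := by
          apply Finset.sum_le_sum_of_subset_of_nonneg hKM
          intro i _ _
          exact mul_nonneg (Real.exp_pos _).le hA₀pos.le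
      _ = (∑ k ∈ Finset.range KM, Real.exp (-(4 : ℝ) ^ k * ε)) * A₀ := by
          rw [Finset.sum_mul]
      _ ≤ (4 / Real.log 2) * L * A₀ := by
          apply mul_le_mul_of_nonneg_right (sumC ε hε hε2 KM) hA₀pos.le
      _ = A₀ * ((4 / Real.log 2) * L) := by ring
  -- relating the symmetric sum to G
  set f : {m : ℤ // m ≠ 0} → ℝ := fun m =>
    Real.exp (-((m : ℤ) : ℝ) ^ 2 * ε) /
      (|((m : ℤ) : ℝ)| ^ θ * torusNorm (((m : ℤ) : ℝ) * α) ^ τ) with hf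
  have hfG : ∀ m : {m : ℤ // m ≠ 0}, f m = G (m.1.natAbs) := by
    intro m
    have hn0 : m.1.natAbs ≠ 0 := Int.natAbs_ne_zero.mpr m.2
    have habs : ((m.1.natAbs : ℕ) : ℝ) = |((m.1 : ℤ) : ℝ)| := by
      rw [Nat.cast_natAbs, Int.cast_abs]
    have htneq : torusNorm ((m.1.natAbs : ℝ) * α) = torusNorm (((m.1 : ℤ) : ℝ) * α) := by
      rw [habs]
      rcases abs_cases ((m.1 : ℤ) : ℝ) with ⟨h, _⟩ | ⟨h, _⟩
      · rw [h]
      · rw [h, neg_mul, torusNorm_neg]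
    rw [hf, hG]
    dsimp only
    rw [if_neg hn0, htneq, habs]
    congr 2
    rw [sq_abs]
  have hf0 : ∀ m, 0 ≤ f m := by
    intro m
    rw [hfG]
    exact hG0 _
  -- final bound
  have hfin : ∀ s : Finset {m : ℤ // m ≠ 0},
      ∑ m ∈ s, f m ≤ 2 * A₀ * (4 / Real.log 2) * L := by
    intro s
    have hmaps : ∀ x ∈ s, x.1.natAbs ∈ s.image (fun m : {m : ℤ // m ≠ 0} => m.1.natAbs) :=
      fun x hx => Finset.mem_image_of_mem _ hx
    have hker := Finset.sum_fiberwise_of_maps_to hmaps f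
    rw [← hker]
    have hfiber : ∀ y ∈ s.image (fun m : {m : ℤ // m ≠ 0} => m.1.natAbs),
        ∑ x ∈ s.filter (fun x => x.1.natAbs = y), f x ≤ 2 * G y := by
      intro y _
      have hcongr : ∀ x ∈ s.filter (fun x : {m : ℤ // m ≠ 0} => x.1.natAbs = y), f x = G y := by
        intro x hx
        rw [hfG, (Finset.mem_filter.mp hx).2]
      rw [Finset.sum_congr rfl hcongr, Finset.sum_const, nsmul_eq_mul]
      have hcard : (s.filter (fun x : {m : ℤ // m ≠ 0} => x.1.natAbs = y)).card ≤ 2 := by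
        have hinj : Set.InjOn (fun x : {m : ℤ // m ≠ 0} => decide (0 ≤ x.1))
            (s.filter (fun x : {m : ℤ // m ≠ 0} => x.1.natAbs = y)) := by
          intro x hx x' hx' hxy
          have hx2 := (Finset.mem_filter.mp hx).2
          have hx2' := (Finset.mem_filter.mp hx').2
          simp only [decide_eq_decide] at hxy
          apply Subtype.ext
          omega
        have := Finset.card_le_card_of_injOn (fun x : {m : ℤ // m ≠ 0} => decide (0 ≤ x.1))
          (fun x _ => Finset.mem_univ _) hinj
        simpa using this
      have : ((s.filter (fun x : {m : ℤ // m ≠ 0} => x.1.natAbs = y)).card : ℝ) ≤ 2 := by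
        exact_mod_cast hcard
      exact mul_le_mul_of_nonneg_right this (hG0 y)
    calc ∑ y ∈ s.image (fun m : {m : ℤ // m ≠ 0} => m.1.natAbs),
          ∑ x ∈ s.filter (fun x => x.1.natAbs = y), f x
        ≤ ∑ y ∈ s.image (fun m : {m : ℤ // m ≠ 0} => m.1.natAbs), 2 * G y :=
          Finset.sum_le_sum hfiber
      _ = 2 * ∑ y ∈ s.image (fun m : {m : ℤ // m ≠ 0} => m.1.natAbs), G y := by
          rw [Finset.mul_sum]
      _ ≤ 2 * (A₀ * ((4 / Real.log 2) * L)) := by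
          have := hGsum (s.image (fun m : {m : ℤ // m ≠ 0} => m.1.natAbs))
          linarith
      _ = 2 * A₀ * (4 / Real.log 2) * L := by ring
  by_cases hsum : Summable f
  · have := Summable.tsum_le_of_sum_le hsum hfin
    calc (∑' m, f m) ≤ 2 * A₀ * (4 / Real.log 2) * L := this
      _ = 2 * A₀ * (4 / Real.log 2) * Real.log ε⁻¹ := by rw [hLdef]
  · rw [tsum_eq_zero_of_not_summable hsum]
    have : (0:ℝ) < 2 * A₀ * (4 / Real.log 2) * L := by positivity
    linarith
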